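/- Let the incomplete pairwise comparison matrix 𝒜 on m alternatives (m ≥ 3) be such that its associated directed graph G_d is a single directed cycle v_1 → v_2 → ⋯ → v_m → v_1, with 𝒜 values strictly greater than 1 on every edge of the cycle, and suppose the edge (v_m, v_1) is the unique edge of the cycle attaining the minimum 𝒜 value. Then Problem 1 has a unique optimal solution, namely x_ij = 1 for all 1 ≤ i < j ≤ m and x_ij = 0 for all other ordered pairs; its optimal value is σ = Σ_{i=1}^{m−1} ln 𝒜_{i,i+1} − ln 𝒜_{m,1}. -/

import Mathlib

noncomputable section

/-- A feasible pairwise ordinal preference assignment. -/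
def Feasible {n : ℕ} (x : Fin n → Fin n → ℝ) : Prop :=
  (∀ i j : Fin n, i ≠ j → (x i j = 0 ∨ x i j = 1)) ∧
  (∀ i j : Fin n, i ≠ j → x i j + x j i ≤ 1) ∧
  (∀ i j k : Fin n, i ≠ j → j ≠ k → i ≠ k → x i k * x k j ≤ x i j)

/-- The weighted ordinal satisfaction index `σ`, each unordered edge counted once
(half the sum over ordered adjacent pairs, the summand being symmetric). -/
def sigmaIdx {n : ℕ} (G : SimpleGraph (Fin n)) [DecidableRel G.Adj]
    (A : Fin n → Fin n → ℝ) (x : Fin n → Fin n → ℝ) : ℝ :=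
  (1 / 2) * ∑ i : Fin n, ∑ j : Fin n,
    if G.Adj i j then Real.log (A i j) * (x i j - x j i) else 0

open scoped Classical in
/-- The tie index `τ` (identically zero when no comparison equals one). -/
def tieIdx {n : ℕ} (G : SimpleGraph (Fin n)) [DecidableRel G.Adj]
    (A : Fin n → Fin n → ℝ) (δ : ℝ) (x : Fin n → Fin n → ℝ) : ℝ :=
  -(δ / 2) * ∑ i : Fin n, ∑ j : Fin n,
    if G.Adj i j ∧ A i j = 1 then x i j + x j i else 0

/- ------------------ auxiliary lemmas ------------------ -/

lemma aux_mod' (m a s : ℕ) (ha : a < m) (hs : s < m) :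
    (a + 1 + s) % m = if a + 1 + s < m then a + 1 + s else (a + 1 + s) - m := by
  split
  · exact Nat.mod_eq_of_lt ‹_›
  · rw [Nat.mod_eq_sub_mod (by omega), Nat.mod_eq_of_lt (by omega)]

lemma le_one_of_feasible {n : ℕ} {y : Fin n → Fin n → ℝ} (hy : Feasible y)
    {i j : Fin n} (hij : i ≠ j) : y i j ≤ 1 := by
  have h1 := hy.2.1 i j hij
  rcases hy.1 j i hij.symm with h | h <;> linarith

lemma nonneg_of_feasible {n : ℕ} {y : Fin n → Fin n → ℝ} (hy : Feasible y)
    {i j : Fin n} (hij : i ≠ j) : 0 ≤ y i j := by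
  rcases hy.1 i j hij with h | h <;> linarith

lemma succ_ne_self' {k : ℕ} (i : Fin (k+3)) : i + 1 ≠ i := by
  intro h
  have h1 : (i : Fin (k+3)) + 1 = i + 0 := by rw [add_zero]; exact h
  have h2 : (1 : Fin (k+3)) = 0 := add_left_cancel h1
  have := congrArg Fin.val h2
  simp at this

lemma succ_ne_pred' {k : ℕ} (i : Fin (k+3)) : i + 1 ≠ i - 1 := by
  intro h
  have h1 : i + 1 + 1 = i := by rw [h, sub_add_cancel]
  have h2 := congrArg Fin.val h1
  have hv : ((i + 1 + 1 : Fin (k+3))).val = (i.val + 1 + 1) % (k+3) := by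
    simp [Fin.add_def, Fin.val_one, Nat.mod_add_mod]
  rw [hv, aux_mod' (k+3) i.val 1 i.isLt (by omega)] at h2
  split_ifs at h2 <;> omega

open Fin.NatCast in
/-- wrap-around chain. -/
lemma chain_wrap {k : ℕ} {y : Fin (k+3) → Fin (k+3) → ℝ} (hy : Feasible y)
    (a : Fin (k+3)) (h : ∀ i : Fin (k+3), i ≠ a → y i (i + 1) = 1) :
    y (a + 1) a = 1 := by
  set w : ℕ → Fin (k+3) := fun s => a + 1 + (s : Fin (k+3)) with hwdef
  have hval : ∀ s : ℕ, s < (k+3) → (w s).val = if a.val + 1 + s < (k+3) then a.val + 1 + s else a.val + 1 + s - (k+3) := by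
    intro s hs
    have : (w s).val = (a.val + 1 + s) % (k+3) := by
      simp [hwdef, Fin.add_def, Fin.val_natCast, Nat.add_mod]
    rw [this, aux_mod' (k+3) a.val s a.isLt hs]
  have hinj : ∀ s t : ℕ, s < (k+3) → t < (k+3) → w s = w t → s = t := by
    intro s t hs ht hst
    have := congrArg Fin.val hst
    rw [hval s hs, hval t ht] at this
    have ha := a.isLt
    split_ifs at this <;> omega
  have hne_a : ∀ s : ℕ, s < (k+3) - 1 → w s ≠ a := by
    intro s hs hcon
    have := congrArg Fin.val hcon
    rw [hval s (by omega)] at this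
    have ha := a.isLt
    split_ifs at this <;> omega
  have hsucc : ∀ s : ℕ, w (s + 1) = w s + 1 := by
    intro s
    simp only [hwdef, Nat.cast_add, Nat.cast_one]
    rw [← add_assoc]
  have hw0 : w 0 = a + 1 := by simp [hwdef]
  have hwlast : w ((k+3) - 1) = a := by
    apply Fin.ext
    rw [hval ((k+3) - 1) (by omega)]
    have ha := a.isLt
    split_ifs <;> omega
  have main : ∀ t : ℕ, 1 ≤ t → t ≤ (k+3) - 1 → y (w 0) (w t) = 1 := by
    intro t
    induction t with
    | zero => omega
    | succ t ih =>
      intro _ ht1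
      rcases Nat.eq_or_lt_of_le (show 1 ≤ t + 1 from by omega) with h1 | h1
      · have ht0 : t = 0 := by omega
        subst ht0
        rw [hsucc 0]
        exact h (w 0) (hne_a 0 (by omega))
      · have ht : 1 ≤ t := by omega
        have ih' := ih ht (by omega)
        have hedge : y (w t) (w (t + 1)) = 1 := by
          rw [hsucc t]
          exact h (w t) (hne_a t (by omega))
        have d1 : w 0 ≠ w t := fun hc => by have := hinj 0 t (by omega) (by omega) hc; omega
        have d2 : w t ≠ w (t + 1) := fun hc => by have := hinj t (t+1) (by omega) (by omega) hc; omega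
        have d3 : w 0 ≠ w (t + 1) := fun hc => by have := hinj 0 (t+1) (by omega) (by omega) hc; omega
        have htr := hy.2.2 (w 0) (w (t+1)) (w t) d3 d2.symm d1
        rw [ih', hedge, one_mul] at htr
        have hle := le_one_of_feasible hy d3
        linarith
  have := main ((k+3) - 1) (by omega) (by omega)
  rwa [hw0, hwlast] at this

/-- linear chain within `0 … last`. -/
lemma chain_lin {k : ℕ} {y : Fin (k+3) → Fin (k+3) → ℝ} (hy : Feasible y)
    (h : ∀ i : Fin (k+3), i ≠ Fin.last (k+2) → y i (i+1) = 1) :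
    ∀ i j : Fin (k+3), i < j → y i j = 1 := by
  have main : ∀ t : ℕ, ∀ i j : Fin (k+3), j.val = i.val + 1 + t → y i j = 1 := by
    intro t
    induction t with
    | zero =>
      intro i j hj
      have hjlt := j.isLt
      have hiL : i ≠ Fin.last (k+2) := by
        intro hc
        rw [hc] at hj
        simp [Fin.last] at hj
        omega
      have hij : j = i + 1 := by
        apply Fin.ext
        rw [Fin.val_add_one]
        simp only [hiL, if_false]
        omega
      rw [hij]; exact h i hiL
    | succ t ih =>
      intro i j hj
      have hjlt := j.isLt
      set p : Fin (k+3) := ⟨i.val + 1 + t, by omega⟩ with hp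
      have hpv : p.val = i.val + 1 + t := rfl
      have h1 : y i p = 1 := ih i p hpv
      have hpL : p ≠ Fin.last (k+2) := by
        intro hc
        have := congrArg Fin.val hc
        rw [hpv, Fin.val_last] at this
        omega
      have hpj : j = p + 1 := by
        apply Fin.ext
        rw [Fin.val_add_one]
        simp only [hpL, if_false]
        omega
      have h2 : y p j = 1 := by rw [hpj]; exact h p hpL
      have d1 : i ≠ p := by
        intro hc; have := congrArg Fin.val hc; rw [hpv] at this; omega
      have d2 : j ≠ p := by
        intro hc; have := congrArg Fin.val hc; rw [hpv] at this; omega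
      have d3 : i ≠ j := by
        intro hc; have := congrArg Fin.val hc; omega
      have htr := hy.2.2 i j p d3 d2 d1
      rw [h1, h2, one_mul] at htr
      have hle := le_one_of_feasible hy d3
      linarith
  intro i j hij
  have := Fin.lt_def.mp hij
  exact main (j.val - i.val - 1) i j (by omega)

/-- σ reduces to a single sum over cycle edges. -/
lemma sigma_formula {k : ℕ} (G : SimpleGraph (Fin (k+3))) [DecidableRel G.Adj]
    (A : Fin (k+3) → Fin (k+3) → ℝ)
    (hAdj : ∀ i j : Fin (k+3), G.Adj i j ↔ (j = i + 1 ∨ i = j + 1))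
    (hrec : ∀ i j, G.Adj i j → A j i = 1 / A i j)
    (y : Fin (k+3) → Fin (k+3) → ℝ) :
    sigmaIdx G A y
      = ∑ i : Fin (k+3), Real.log (A i (i+1)) * (y i (i+1) - y (i+1) i) := by
  have hAdjsucc : ∀ i : Fin (k+3), G.Adj i (i+1) := fun i => (hAdj i (i+1)).mpr (Or.inl rfl)
  have hAdjpred : ∀ i : Fin (k+3), G.Adj i (i-1) :=
    fun i => (hAdj i (i-1)).mpr (Or.inr (by rw [sub_add_cancel]))
  have hinner : ∀ i : Fin (k+3),
      (∑ j : Fin (k+3), if G.Adj i j then Real.log (A i j) * (y i j - y j i) else 0)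
      = Real.log (A i (i+1)) * (y i (i+1) - y (i+1) i)
        + Real.log (A i (i-1)) * (y i (i-1) - y (i-1) i) := by
    intro i
    rw [← Finset.sum_subset (Finset.subset_univ ({i+1, i-1} : Finset (Fin (k+3))))
      (fun j _ hj => by
        rw [if_neg]
        intro hadj
        rcases (hAdj i j).mp hadj with hh | hh
        · exact hj (by simp [hh])
        · exact hj (by
            simp only [Finset.mem_insert, Finset.mem_singleton]
            right
            exact eq_sub_iff_add_eq.mpr hh.symm))]
    rw [Finset.sum_pair (succ_ne_pred' i), if_pos (hAdjsucc i), if_pos (hAdjpred i)]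
  have hflip : (∑ i : Fin (k+3), Real.log (A i (i-1)) * (y i (i-1) - y (i-1) i))
      = ∑ i : Fin (k+3), Real.log (A i (i+1)) * (y i (i+1) - y (i+1) i) := by
    rw [← Equiv.sum_comp (Equiv.addRight (1 : Fin (k+3)))
      (fun i => Real.log (A i (i-1)) * (y i (i-1) - y (i-1) i))]
    apply Finset.sum_congr rfl
    intro i _
    simp only [Equiv.coe_addRight, add_sub_cancel_right]
    rw [hrec i (i+1) (hAdjsucc i), one_div, Real.log_inv]
    ring
  unfold sigmaIdx
  rw [Finset.sum_congr rfl (fun i _ => hinner i), Finset.sum_add_distrib, hflip]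
  ring

/-- τ vanishes. -/
lemma tie_zero {k : ℕ} (G : SimpleGraph (Fin (k+3))) [DecidableRel G.Adj]
    (A : Fin (k+3) → Fin (k+3) → ℝ)
    (hAdj : ∀ i j : Fin (k+3), G.Adj i j ↔ (j = i + 1 ∨ i = j + 1))
    (hpos : ∀ i j, G.Adj i j → 0 < A i j)
    (hrec : ∀ i j, G.Adj i j → A j i = 1 / A i j)
    (hgt : ∀ i : Fin (k+3), 1 < A i (i + 1))
    (δ : ℝ) (y : Fin (k+3) → Fin (k+3) → ℝ) :
    tieIdx G A δ y = 0 := by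
  have hAdjsucc : ∀ i : Fin (k+3), G.Adj i (i+1) := fun i => (hAdj i (i+1)).mpr (Or.inl rfl)
  have hne : ∀ i j : Fin (k+3), G.Adj i j → A i j ≠ 1 := by
    intro i j hadj
    rcases (hAdj i j).mp hadj with hh | hh
    · subst hh; exact ne_of_gt (hgt i)
    · subst hh
      rw [hrec j (j+1) (hAdjsucc j)]
      have h1 := hgt j
      have h0 : 0 < A j (j+1) := lt_trans one_pos h1
      intro hc
      rw [div_eq_one_iff_eq (ne_of_gt h0)] at hc
      linarith
  unfold tieIdx
  rw [Finset.sum_eq_zero, mul_zero]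
  intro i _
  rw [Finset.sum_eq_zero]
  intro j _
  rw [if_neg]
  rintro ⟨hadj, hone⟩
  exact hne i j hadj hone
theorem problem1_single_cycle_unique_optimum
    (k : ℕ) (G : SimpleGraph (Fin (k + 3))) [DecidableRel G.Adj]
    (A : Fin (k + 3) → Fin (k + 3) → ℝ)
    (hAdj : ∀ i j : Fin (k + 3), G.Adj i j ↔ (j = i + 1 ∨ i = j + 1))
    (hpos : ∀ i j, G.Adj i j → 0 < A i j)
    (hrec : ∀ i j, G.Adj i j → A j i = 1 / A i j)
    (hzero : ∀ i j, ¬ G.Adj i j → A i j = 0)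
    (hgt : ∀ i : Fin (k + 3), 1 < A i (i + 1))
    (hmin : ∀ i : Fin (k + 3), i ≠ Fin.last (k + 2) →
      A (Fin.last (k + 2)) (Fin.last (k + 2) + 1) < A i (i + 1))
    (δ : ℝ) (hδ : 0 < δ)
    (xbar : Fin (k + 3) → Fin (k + 3) → ℝ)
    (hxbar : ∀ i j : Fin (k + 3), xbar i j = if i < j then 1 else 0) :
    Feasible xbar ∧
    (∀ y, Feasible y →
      sigmaIdx G A y + tieIdx G A δ y ≤ sigmaIdx G A xbar + tieIdx G A δ xbar) ∧
    (∀ y, Feasible y →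
      (∀ z, Feasible z →
        sigmaIdx G A z + tieIdx G A δ z ≤ sigmaIdx G A y + tieIdx G A δ y) →
      ∀ i j, i ≠ j → y i j = xbar i j) ∧
    sigmaIdx G A xbar =
      (∑ i ∈ Finset.univ.filter (fun i : Fin (k + 3) => i ≠ Fin.last (k + 2)),
        Real.log (A i (i + 1)))
        - Real.log (A (Fin.last (k + 2)) (Fin.last (k + 2) + 1)) := by
  classical
  have hne1 : ∀ i : Fin (k+3), i ≠ i + 1 := fun i => (succ_ne_self' i).symm
  set c : Fin (k+3) → ℝ := fun i => Real.log (A i (i+1)) with hc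
  have hcpos : ∀ i, 0 < c i := fun i => Real.log_pos (hgt i)
  have hcmin : ∀ i, i ≠ Fin.last (k+2) → c (Fin.last (k+2)) < c i := fun i hi =>
    Real.log_lt_log (lt_trans one_pos (hgt (Fin.last (k+2)))) (hmin i hi)
  have hLval : ∀ y, sigmaIdx G A y = ∑ i, c i * (y i (i+1) - y (i+1) i) :=
    fun y => sigma_formula G A hAdj hrec y
  have htie : ∀ y, tieIdx G A δ y = 0 := fun y => tie_zero G A hAdj hpos hrec hgt δ y
  have hfilter : (∑ i ∈ Finset.univ.filter (fun i : Fin (k+3) => i ≠ Fin.last (k+2)), c i)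
      = (∑ i : Fin (k+3), c i) - c (Fin.last (k+2)) := by
    have h1 := Finset.sum_filter_add_sum_filter_not Finset.univ
      (fun i : Fin (k+3) => i ≠ Fin.last (k+2)) c
    have h2 : Finset.univ.filter (fun i : Fin (k+3) => ¬ i ≠ Fin.last (k+2)) = {Fin.last (k+2)} := by
      ext x; simp
    rw [h2, Finset.sum_singleton] at h1
    linarith
  -- xbar edge values
  have hxe : ∀ i : Fin (k+3), i ≠ Fin.last (k+2) → xbar i (i+1) = 1 ∧ xbar (i+1) i = 0 := by
    intro i hi
    have hv : (i+1).val = i.val + 1 := by rw [Fin.val_add_one, if_neg hi]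
    have hlt : i < i + 1 := by rw [Fin.lt_def, hv]; omega
    exact ⟨by rw [hxbar, if_pos hlt], by rw [hxbar, if_neg (asymm hlt)]⟩
  have hvL : ((Fin.last (k+2) : Fin (k+3)) + 1).val = 0 := by
    rw [Fin.val_add_one, if_pos rfl]
  have hltL : Fin.last (k+2) + 1 < Fin.last (k+2) := by
    rw [Fin.lt_def, hvL, Fin.val_last]; omega
  have hxL : xbar (Fin.last (k+2)) (Fin.last (k+2) + 1) = 0
      ∧ xbar (Fin.last (k+2) + 1) (Fin.last (k+2)) = 1 :=
    ⟨by rw [hxbar, if_neg (asymm hltL)], by rw [hxbar, if_pos hltL]⟩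
  -- feasibility of xbar
  have hfeas : Feasible xbar := by
    refine ⟨?_, ?_, ?_⟩
    · intro i j hij; rw [hxbar]; split_ifs <;> simp
    · intro i j hij
      rw [hxbar, hxbar]
      rcases lt_or_gt_of_ne hij with h | h
      · rw [if_pos h, if_neg (asymm h)]; norm_num
      · rw [if_neg (asymm h), if_pos h]; norm_num
    · intro i j p hij hjp hip
      rw [hxbar, hxbar, hxbar]
      split_ifs with h1 h2 h3 <;> norm_num
      · exact absurd (h1.trans h2) h3
  -- value of sigma xbar
  have hval_xbar : sigmaIdx G A xbar
      = (∑ i ∈ Finset.univ.filter (fun i : Fin (k+3) => i ≠ Fin.last (k+2)), c i)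
        - c (Fin.last (k+2)) := by
    rw [hLval xbar]
    have hpt : ∀ i : Fin (k+3), c i * (xbar i (i+1) - xbar (i+1) i)
        = c i - (if Fin.last (k+2) = i then 2 * c (Fin.last (k+2)) else 0) := by
      intro i
      split_ifs with h
      · rw [← h, hxL.1, hxL.2]; ring
      · rw [(hxe i (fun hc' => h hc'.symm)).1, (hxe i (fun hc' => h hc'.symm)).2]; ring
    rw [Finset.sum_congr rfl (fun i _ => hpt i), Finset.sum_sub_distrib,
      Finset.sum_ite_eq Finset.univ (Fin.last (k+2)) (fun _ => 2 * c (Fin.last (k+2))),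
      if_pos (Finset.mem_univ _), hfilter]
    ring
  have hVx : sigmaIdx G A xbar = (∑ i : Fin (k+3), c i) - 2 * c (Fin.last (k+2)) := by
    rw [hval_xbar, hfilter]; ring
  -- master key lemma
  have key : ∀ y, Feasible y →
      ((∑ i, c i * (y i (i+1) - y (i+1) i)) ≤ (∑ i : Fin (k+3), c i) - 2 * c (Fin.last (k+2))) ∧
      ((∑ i : Fin (k+3), c i) - 2 * c (Fin.last (k+2)) ≤ (∑ i, c i * (y i (i+1) - y (i+1) i)) →
        ∀ i, i ≠ Fin.last (k+2) → y i (i+1) = 1) := by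
    intro y hy
    set S := Finset.univ.filter (fun i : Fin (k+3) => y i (i+1) = 0) with hS
    have hSmem : ∀ i, i ∈ S ↔ y i (i+1) = 0 := by intro i; simp [hS]
    have hnotS : ∀ i, i ∉ S → y i (i+1) = 1 := by
      intro i hi
      rcases hy.1 i (i+1) (hne1 i) with h | h
      · exact absurd ((hSmem i).mpr h) hi
      · exact h
    have hSne : S.Nonempty := by
      rw [Finset.nonempty_iff_ne_empty]
      intro hempty
      have hall : ∀ i : Fin (k+3), i ≠ (0:Fin (k+3)) → y i (i+1) = 1 := by
        intro i _; apply hnotS; rw [hempty]; exact Finset.notMem_empty i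
      have h1 := chain_wrap hy 0 hall
      have h2 : y 0 (0+1) = 1 := hnotS 0 (by rw [hempty]; exact Finset.notMem_empty 0)
      have h3 := hy.2.1 0 (0+1) (hne1 0)
      rw [h2, h1] at h3
      linarith
    have hterm_le : ∀ i, c i * (y i (i+1) - y (i+1) i) ≤ c i := by
      intro i
      have h1 := le_one_of_feasible hy (hne1 i)
      have h2 := nonneg_of_feasible hy (hne1 i).symm
      nlinarith [hcpos i]
    have hterm_S : ∀ i, i ∈ S → c i * (y i (i+1) - y (i+1) i) ≤ 0 := by
      intro i hi
      have h0 := (hSmem i).mp hi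
      have h2 := nonneg_of_feasible hy (hne1 i).symm
      rw [h0]
      nlinarith [hcpos i]
    rcases (show S.card = 1 ∨ 2 ≤ S.card by
        have := Finset.Nonempty.card_pos hSne; omega) with h1 | h2
    · -- exactly one backward edge
      obtain ⟨a, ha⟩ := Finset.card_eq_one.mp h1
      have hall : ∀ i, i ≠ a → y i (i+1) = 1 := by
        intro i hi; apply hnotS; rw [ha]; simp [hi]
      have hfa : y (a+1) a = 1 := chain_wrap hy a hall
      have hea : y a (a+1) = 0 := (hSmem a).mp (by rw [ha]; simp)
      have hfi : ∀ i, i ≠ a → y (i+1) i = 0 := by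
        intro i hi
        have hp := hy.2.1 i (i+1) (hne1 i)
        rw [hall i hi] at hp
        rcases hy.1 (i+1) i (hne1 i).symm with h | h
        · exact h
        · rw [h] at hp; linarith
      have hsum : (∑ i, c i * (y i (i+1) - y (i+1) i)) = (∑ i : Fin (k+3), c i) - 2 * c a := by
        have hpt : ∀ i : Fin (k+3), c i * (y i (i+1) - y (i+1) i)
            = c i - (if a = i then 2 * c a else 0) := by
          intro i
          split_ifs with h
          · rw [← h, hea, hfa]; ring
          · rw [hall i (fun hc' => h hc'.symm), hfi i (fun hc' => h hc'.symm)]; ring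
        rw [Finset.sum_congr rfl (fun i _ => hpt i), Finset.sum_sub_distrib,
          Finset.sum_ite_eq Finset.univ a (fun _ => 2 * c a), if_pos (Finset.mem_univ a)]
      constructor
      · rw [hsum]
        rcases eq_or_ne a (Fin.last (k+2)) with rfl | hne
        · linarith
        · have := hcmin a hne; linarith
      · intro hge i hiL
        rcases eq_or_ne a (Fin.last (k+2)) with rfl | hne
        · exact hall i hiL
        · exfalso; have := hcmin a hne; rw [hsum] at hge; linarith
    · -- at least two backward edges: strictly suboptimal
      obtain ⟨a, haS, b, hbS, hab⟩ := Finset.one_lt_card.mp h2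
      have hbound : (∑ i, c i * (y i (i+1) - y (i+1) i))
          ≤ ∑ i : Fin (k+3),
              (c i - (if a = i then c a else 0) - (if b = i then c b else 0)) := by
        apply Finset.sum_le_sum
        intro i _
        rcases eq_or_ne i a with rfl | hia
        · rw [if_pos rfl, if_neg (fun hc' : b = i => hab hc'.symm)]
          have := hterm_S i haS
          linarith
        · rcases eq_or_ne i b with rfl | hib
          · rw [if_pos rfl, if_neg (fun hc' : a = i => hia hc'.symm)]
            have := hterm_S i hbS
            linarith
          · rw [if_neg (fun hc' : a = i => hia hc'.symm), if_neg (fun hc' : b = i => hib hc'.symm)]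
            have := hterm_le i
            linarith
      have hrhs : (∑ i : Fin (k+3),
            (c i - (if a = i then c a else 0) - (if b = i then c b else 0)))
          = (∑ i : Fin (k+3), c i) - c a - c b := by
        rw [Finset.sum_sub_distrib, Finset.sum_sub_distrib,
          Finset.sum_ite_eq Finset.univ a (fun _ => c a), if_pos (Finset.mem_univ a),
          Finset.sum_ite_eq Finset.univ b (fun _ => c b), if_pos (Finset.mem_univ b)]
      have habL : 2 * c (Fin.last (k+2)) < c a + c b := by
        rcases eq_or_ne a (Fin.last (k+2)) with rfl | hna
        · have hb := hcmin b (Ne.symm hab)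
          linarith
        · rcases eq_or_ne b (Fin.last (k+2)) with rfl | hnb
          · have := hcmin a hna; linarith
          · have := hcmin a hna; have := hcmin b hnb; linarith
      have hlt : (∑ i, c i * (y i (i+1) - y (i+1) i))
          < (∑ i : Fin (k+3), c i) - 2 * c (Fin.last (k+2)) := by
        rw [hrhs] at hbound
        linarith
      exact ⟨le_of_lt hlt, fun hge => absurd hge (not_le.mpr hlt)⟩
  refine ⟨hfeas, ?_, ?_, by exact hval_xbar⟩
  · intro y hy
    rw [htie y, htie xbar, add_zero, add_zero, hVx, hLval y]
    exact (key y hy).1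
  · intro y hy hopt i j hij
    have h1 := hopt xbar hfeas
    rw [htie y, htie xbar, add_zero, add_zero, hVx, hLval y] at h1
    have hall := (key y hy).2 h1
    have hchain := chain_lin hy hall
    rcases lt_or_gt_of_ne hij with h | h
    · rw [hxbar, if_pos h]; exact hchain i j h
    · have hji : y j i = 1 := hchain j i h
      have hp := hy.2.1 j i hij.symm
      rw [hji] at hp
      rw [hxbar, if_neg (asymm h)]
      rcases hy.1 i j hij with h4 | h4
      · exact h4
      · rw [h4] at hp; linarith
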